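/- Let 0 < α ≤ 1, let A : 𝓑 → ℝ be α-Hölder, let ψ_A > 0 be a continuous eigenfunction of L_A with eigenvalue λ_A > 0, let Ā = A + log ψ_A − log ψ_A ∘ σ − log λ_A be the associated normalized potential, and let m be the unique Borel probability measure fixed by L_Ā^*. Define the finite Borel measure ρ_A on 𝓑 by ρ_A(E) = ∫_E (1/ψ_A) dm. Then ρ_A is an eigenmeasure of the dual Ruelle operator: for every bounded continuous φ : 𝓑 → ℝ, ∫ L_A(φ) dρ_A = λ_A ∫ φ dρ_A. -/

import Mathlib

open MeasureTheory Filter Topology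

noncomputable section

instance : Fact (0 < 2 * Real.pi) := ⟨by positivity⟩

/-- The circle `M = ℝ/2πℤ` with arc-length metric. -/
abbrev Circ : Type := AddCircle (2 * Real.pi)

/-- The normalized Haar (Lebesgue) probability measure on the circle. -/
def haarC : Measure Circ := AddCircle.haarAddCircle

/-- The Bernoulli space `𝓑 = M^ℕ`. -/
abbrev Bs : Type := ℕ → Circ

/-- The left shift `σ`. -/
def shift (x : Bs) : Bs := fun n => x (n + 1)

/-- Prepending a symbol: `cons a x = ax = (a, x₀, x₁, …)`. -/
def cons (a : Circ) (x : Bs) : Bs := fun n =>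
  match n with
  | 0 => a
  | k + 1 => x k

/-- The metric `d(x,y) = Σ_k 2^{-k} d_M(x_k, y_k)` on `𝓑`. -/
def dB (x y : Bs) : ℝ := ∑' k : ℕ, (1 / 2 : ℝ) ^ k * dist (x k) (y k)

/-- `A` is α-Hölder with constant `H` for the metric `dB`. -/
def IsHolderB (α H : ℝ) (A : Bs → ℝ) : Prop := ∀ x y, |A x - A y| ≤ H * dB x y ^ α

/-- The Ruelle operator `L_A ψ (x) = ∫_M e^{A(ax)} ψ(ax) da`. -/
def Ruelle (A : Bs → ℝ) (ψ : Bs → ℝ) : Bs → ℝ :=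
  fun x => ∫ a, Real.exp (A (cons a x)) * ψ (cons a x) ∂haarC

/-- `m` is a fixed point of the dual Ruelle operator `L_A^*`. -/
def FixedDual (A : Bs → ℝ) (m : Measure Bs) : Prop :=
  ∀ ψ : Bs → ℝ, Continuous ψ → (∃ C, ∀ x, |ψ x| ≤ C) →
    ∫ x, Ruelle A ψ x ∂m = ∫ x, ψ x ∂m

/-- The normalized potential `Ā = A + log ψ_A − log ψ_A ∘ σ − log λ_A`. -/
def normPot (A ψ : Bs → ℝ) (lam : ℝ) : Bs → ℝ :=
  fun x => A x + Real.log (ψ x) - Real.log (ψ (shift x)) - Real.log lam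

/-- the measure `ρ_A = (1/ψ_A)·m` is an eigenmeasure of the dual Ruelle
operator: `∫ L_A φ dρ_A = λ_A ∫ φ dρ_A` for every bounded continuous `φ`. -/
theorem eigenmeasure_dual (α H : ℝ) (hα0 : 0 < α) (hα1 : α ≤ 1)
    (A : Bs → ℝ) (hA : IsHolderB α H A)
    (ψ : Bs → ℝ) (hψc : Continuous ψ) (hψpos : ∀ x, 0 < ψ x)
    (lam : ℝ) (hlam : 0 < lam) (heig : ∀ x, Ruelle A ψ x = lam * ψ x)
    (m : Measure Bs) (hm : IsProbabilityMeasure m)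
    (hfix : FixedDual (normPot A ψ lam) m)
    (hmuniq : ∀ m' : Measure Bs, IsProbabilityMeasure m' →
      FixedDual (normPot A ψ lam) m' → m' = m) :
    ∀ φ : Bs → ℝ, Continuous φ → (∃ C, ∀ x, |φ x| ≤ C) →
      ∫ x, Ruelle A φ x ∂(m.withDensity fun x => ENNReal.ofReal (1 / ψ x)) =
        lam * ∫ x, φ x ∂(m.withDensity fun x => ENNReal.ofReal (1 / ψ x)) := by

  intro φ hφc hφb
  obtain ⟨C, hC⟩ := hφb
  obtain ⟨x₀, -, hmin⟩ := isCompact_univ.exists_isMinOn Set.univ_nonempty hψc.continuousOn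
  set g : Bs → ℝ := fun x => φ x / ψ x with hg
  have hgc : Continuous g := hφc.div hψc fun x => (hψpos x).ne'
  have hgb : ∃ C', ∀ x, |g x| ≤ C' := by
    refine ⟨C / ψ x₀, fun x => ?_⟩
    have h1 : |g x| = |φ x| / ψ x := by
      rw [hg, abs_div, abs_of_pos (hψpos x)]
    rw [h1]
    exact div_le_div₀ ((abs_nonneg _).trans (hC x₀)) (hC x) (hψpos x₀)
      (hmin (Set.mem_univ x))
  have key := hfix g hgc hgb
  have hpt : ∀ x, Ruelle (normPot A ψ lam) g x = lam⁻¹ * ((ψ x)⁻¹ * Ruelle A φ x) := by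
    intro x
    unfold Ruelle
    rw [← mul_assoc, ← integral_const_mul]
    congr 1
    funext a
    have hsh : shift (cons a x) = x := by funext n; rfl
    have hexp : Real.exp (normPot A ψ lam (cons a x)) =
        Real.exp (A (cons a x)) * ψ (cons a x) * (ψ x)⁻¹ * lam⁻¹ := by
      unfold normPot
      rw [hsh, Real.exp_sub, Real.exp_sub, Real.exp_add, Real.exp_log (hψpos _),
        Real.exp_log (hψpos x), Real.exp_log hlam]
      ring
    rw [hexp, hg]
    have h2 : ψ (cons a x) ≠ 0 := (hψpos _).ne'
    field_simp
  simp_rw [hpt] at key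
  rw [integral_const_mul] at key
  have hf_meas : Measurable fun x : Bs => (1 / ψ x).toNNReal :=
    (measurable_const.div hψc.measurable).real_toNNReal
  have hconv : ∀ h : Bs → ℝ,
      ∫ x, h x ∂(m.withDensity fun x => ENNReal.ofReal (1 / ψ x)) =
        ∫ x, (ψ x)⁻¹ * h x ∂m := by
    intro h
    rw [show (fun x : Bs => ENNReal.ofReal (1 / ψ x))
        = fun x : Bs => ((1 / ψ x).toNNReal : ENNReal) from rfl,
      integral_withDensity_eq_integral_smul hf_meas]
    congr 1
    funext x
    rw [NNReal.smul_def, Real.coe_toNNReal _ (one_div_nonneg.mpr (hψpos x).le)]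
    rw [one_div, smul_eq_mul]
  rw [hconv, hconv]
  have hkey2 : ∫ x, (ψ x)⁻¹ * Ruelle A φ x ∂m = lam * ∫ x, g x ∂m := by
    rw [← key]
    field_simp
  rw [hkey2]
  congr 1
  apply integral_congr_ae
  filter_upwards with x
  show φ x / ψ x = (ψ x)⁻¹ * φ x
  rw [div_eq_inv_mul]
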